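/- Let x, y ∈ [0,1) with binary digit sequences (x_n), (y_n). Define sequences s, r by: s_n = 1 if exactly one of x_n, y_n equals 1, s_n = x_n otherwise; and r_n = 0 if x_n = 0 and y_n = 1, r_n = y_n otherwise. Then x + y ≡ s + r (mod 1), every 1-position of s is a 1-position of x or of y, and every 1-position of r is a 1-position of y. -/

import Mathlib

open Filter MeasureTheory Set

/-- The `n`-th binary digit of `x ∈ [0,1)` (dyadic rationals get the
terminating expansion, i.e. the one with finitely many `1`'s). -/
noncomputable def digit (x : ℝ) (n : ℕ) : ℕ := (⌊x * 2 ^ n⌋).toNat % 2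

/-- Positions of digit `1` in the binary expansion of `x`. -/
def onesOf (x : ℝ) : Set ℕ := {n : ℕ | digit x n = 1}

/-- `A` contains an `m`-term arithmetic progression. -/
def HasAP (A : Set ℕ) (m : ℕ) : Prop :=
  ∃ a d : ℕ, 1 ≤ d ∧ ∀ t < m, a + t * d ∈ A

/-- `F i`: numbers in `[0,1)` whose binary expansion contains no `i`-term
arithmetic progression of positions of digit `1`. -/
noncomputable def F (i : ℕ) : Set ℝ :=
  {x ∈ Set.Ico (0 : ℝ) 1 | ¬ HasAP (onesOf x) i}

/-- The Erdős set. -/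
noncomputable def E : Set ℝ := ⋃ i, ⋃ (_ : 3 ≤ i), F i

/-- `s_n = 1` if exactly one of `x_n, y_n` equals `1`, and `s_n = x_n` otherwise. -/
noncomputable def sfun (x y : ℝ) (n : ℕ) : ℕ :=
  if digit x n + digit y n = 1 then 1 else digit x n

/-- `r_n = 0` if `x_n = 0` and `y_n = 1`, and `r_n = y_n` otherwise. -/
noncomputable def rfun (x y : ℝ) (n : ℕ) : ℕ :=
  if digit x n = 0 ∧ digit y n = 1 then 0 else digit y n

lemma digit_le_one (x : ℝ) (n : ℕ) : digit x n ≤ 1 :=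
  Nat.le_of_lt_succ (Nat.mod_lt _ (by norm_num))

lemma summable_aux (f : ℕ → ℕ) (hf : ∀ n, f n ≤ 1) :
    Summable (fun n => (f n : ℝ) / 2 ^ n) := by
  apply Summable.of_nonneg_of_le (fun n => by positivity) (fun n => ?_)
    (summable_geometric_of_lt_one (by norm_num) (by norm_num : (1:ℝ)/2 < 1))
  rw [div_pow, one_pow]
  gcongr
  exact_mod_cast hf n

lemma floor_rec (x : ℝ) (hx : 0 ≤ x) (n : ℕ) :
    ⌊x * 2 ^ (n+1)⌋ = 2 * ⌊x * 2 ^ n⌋ + digit x (n+1) := by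
  set t := x * 2 ^ n with ht
  have h1 : x * 2 ^ (n+1) = 2 * Int.fract t + (2 * ⌊t⌋ : ℤ) := by
    push_cast [Int.fract]; ring
  have h2 : ⌊x * 2 ^ (n+1)⌋ = ⌊2 * Int.fract t⌋ + 2 * ⌊t⌋ := by
    rw [h1, Int.floor_add_intCast]
  have hf0 : (0:ℤ) ≤ ⌊2 * Int.fract t⌋ := Int.floor_nonneg.2 (by
    have := Int.fract_nonneg t; linarith)
  have hf1 : ⌊2 * Int.fract t⌋ ≤ 1 := by
    have := Int.fract_lt_one t
    have : ⌊2 * Int.fract t⌋ < 2 := Int.floor_lt.2 (by push_cast; linarith)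
    omega
  have hd : (digit x (n+1) : ℤ) = ⌊2 * Int.fract t⌋ := by
    unfold digit
    have hnn : (0:ℤ) ≤ ⌊x * 2 ^ (n+1)⌋ := Int.floor_nonneg.2 (by positivity)
    push_cast [Int.toNat_of_nonneg hnn]
    omega
  omega

lemma partial_sum_eq (x : ℝ) (hx : x ∈ Set.Ico (0:ℝ) 1) (N : ℕ) :
    ∑ n ∈ Finset.range (N+1), (digit x n : ℝ) / 2 ^ n = (⌊x * 2 ^ N⌋ : ℝ) / 2 ^ N := by
  induction N with
  | zero =>
    simp only [Finset.range_one, Finset.sum_singleton, pow_zero, mul_one, div_one]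
    have h0 : ⌊x⌋ = 0 := Int.floor_eq_zero_iff.2 (by exact ⟨hx.1, hx.2⟩)
    simp [digit, h0]
  | succ N ih =>
    rw [Finset.sum_range_succ, ih, floor_rec x hx.1 N]
    have h2 : (2:ℝ) ^ (N+1) = 2 * 2 ^ N := by ring
    push_cast
    field_simp
    ring

lemma tsum_digit (x : ℝ) (hx : x ∈ Set.Ico (0:ℝ) 1) :
    ∑' n : ℕ, (digit x n : ℝ) / 2 ^ n = x := by
  have hs := summable_aux (digit x) (digit_le_one x)
  have hts : Tendsto (fun N => ∑ n ∈ Finset.range N, (digit x n : ℝ) / 2 ^ n) atTop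
      (nhds (∑' n : ℕ, (digit x n : ℝ) / 2 ^ n)) := hs.hasSum.tendsto_sum_nat
  have hts' : Tendsto (fun N => ∑ n ∈ Finset.range (N+1), (digit x n : ℝ) / 2 ^ n) atTop
      (nhds (∑' n : ℕ, (digit x n : ℝ) / 2 ^ n)) := hts.comp (tendsto_add_atTop_nat 1)
  have hlim : Tendsto (fun N : ℕ => (⌊x * 2 ^ N⌋ : ℝ) / 2 ^ N) atTop (nhds x) := by
    have hlow : Tendsto (fun N : ℕ => x - (1/2:ℝ) ^ N) atTop (nhds x) := by
      simpa using tendsto_const_nhds.sub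
        (tendsto_pow_atTop_nhds_zero_of_lt_one (by norm_num) (by norm_num : (1:ℝ)/2 < 1))
    refine tendsto_of_tendsto_of_tendsto_of_le_of_le hlow tendsto_const_nhds
      (fun N => ?_) (fun N => ?_)
    · have hp : (0:ℝ) < 2 ^ N := by positivity
      have hone : (1/2:ℝ) ^ N * 2 ^ N = 1 := by rw [← mul_pow]; norm_num
      have h := Int.sub_one_lt_floor (x * 2 ^ N)
      rw [le_div_iff₀ hp]
      nlinarith
    · have hp : (0:ℝ) < 2 ^ N := by positivity
      rw [div_le_iff₀ hp]
      exact Int.floor_le _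
  exact tendsto_nhds_unique hts' (by
    simpa [partial_sum_eq x hx] using hlim)

lemma sfun_le_one (x y : ℝ) (n : ℕ) : sfun x y n ≤ 1 := by
  unfold sfun; split_ifs <;> simp [digit_le_one]

lemma rfun_le_one (x y : ℝ) (n : ℕ) : rfun x y n ≤ 1 := by
  unfold rfun; split_ifs <;> simp [digit_le_one]

lemma sfun_add_rfun (x y : ℝ) (n : ℕ) :
    sfun x y n + rfun x y n = digit x n + digit y n := by
  have h1 := digit_le_one x n
  have h2 := digit_le_one y n
  unfold sfun rfun
  split_ifs <;> omega

theorem stmt18 (x y : ℝ) (hx : x ∈ Set.Ico (0 : ℝ) 1) (hy : y ∈ Set.Ico (0 : ℝ) 1) :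
    Int.fract (x + y) =
      Int.fract ((∑' n : ℕ, (sfun x y n : ℝ) / 2 ^ n) + ∑' n : ℕ, (rfun x y n : ℝ) / 2 ^ n) ∧
    (∀ n : ℕ, sfun x y n = 1 → digit x n = 1 ∨ digit y n = 1) ∧
    (∀ n : ℕ, rfun x y n = 1 → digit y n = 1) := by
  refine ⟨?_, ?_, ?_⟩
  · have hs := summable_aux (sfun x y) (sfun_le_one x y)
    have hr := summable_aux (rfun x y) (rfun_le_one x y)
    have hdx := summable_aux (digit x) (digit_le_one x)
    have hdy := summable_aux (digit y) (digit_le_one y)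
    have key : (∑' n : ℕ, (sfun x y n : ℝ) / 2 ^ n) + ∑' n : ℕ, (rfun x y n : ℝ) / 2 ^ n
        = x + y := by
      rw [← Summable.tsum_add hs hr]
      have heq : ∀ n : ℕ, (sfun x y n : ℝ) / 2 ^ n + (rfun x y n : ℝ) / 2 ^ n
          = (digit x n : ℝ) / 2 ^ n + (digit y n : ℝ) / 2 ^ n := by
        intro n
        have h := sfun_add_rfun x y n
        rw [← add_div, ← add_div]
        congr 1
        exact_mod_cast h
      rw [tsum_congr heq, Summable.tsum_add hdx hdy, tsum_digit x hx, tsum_digit y hy]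
    rw [key]
  · intro n h
    have h1 := digit_le_one x n
    have h2 := digit_le_one y n
    unfold sfun at h
    split_ifs at h <;> omega
  · intro n h
    unfold rfun at h
    split_ifs at h <;> omega
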